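/- For each N ∈ ℕ there exists a measurable map ψ from the space of N×N complex matrices to itself such that for every matrix M, ψ(M) is unitary and ψ(M)* M ψ(M) is upper triangular. -/

import Mathlib

open MeasureTheory Matrix


theorem schur_exists : ∀ (n : ℕ) (M : Matrix (Fin n) (Fin n) ℂ),
    ∃ U ∈ Matrix.unitaryGroup (Fin n) ℂ, ((Uᴴ * M * U).BlockTriangular id) := by
  intro n
  induction n with
  | zero =>
      intro M
      exact ⟨1, one_mem _, fun i => i.elim0⟩
  | succ n ih =>
      intro M
      obtain ⟨μ, hμ⟩ := Module.End.exists_eigenvalue (Matrix.toLin' M)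
      obtain ⟨v, hv⟩ := hμ.exists_hasEigenvector
      set E := EuclideanSpace ℂ (Fin (n + 1)) with hE
      set v' : E := (WithLp.equiv 2 (Fin (n+1) → ℂ)).symm v with hv'_def
      have hv'_ne : v' ≠ 0 := by
        rw [hv'_def]; intro h; exact hv.2 (by simpa using congrArg WithLp.ofLp h)
      set w : E := ‖v'‖⁻¹ • v' with hw_def
      have hw_norm : ‖w‖ = 1 := norm_smul_inv_norm hv'_ne
      have h_on : Orthonormal ℂ (Set.restrict {(0 : Fin (n+1))} (fun _ => w)) := by
        constructor
        · intro i; exact hw_norm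
        · intro i j hij
          exact absurd (Subtype.ext (i.2.trans j.2.symm)) hij
      obtain ⟨b, hb⟩ := h_on.exists_orthonormalBasis_extension_of_card_eq
        (by show Module.finrank ℂ (EuclideanSpace ℂ (Fin (n+1))) = _; simp)
      have hb0 : b 0 = w := hb 0 rfl
      -- eigen equation for w
      have h_eig : M.mulVec (w : Fin (n+1) → ℂ) = μ • (w : Fin (n+1) → ℂ) := by
        have h1 : Matrix.toLin' M v = μ • v := hv.apply_eq_smul
        have h2 : M.mulVec v = μ • v := by rwa [Matrix.toLin'_apply] at h1
        show M.mulVec (‖v'‖⁻¹ • v) = μ • (‖v'‖⁻¹ • v)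
        rw [Matrix.mulVec_smul, h2, smul_comm]
      -- the unitary with first column w
      set U₁ : Matrix (Fin (n+1)) (Fin (n+1)) ℂ := Matrix.of (fun i j => b j i) with hU₁_def
      have hinner : ∀ x y : EuclideanSpace ℂ (Fin (n+1)),
          (inner ℂ x y : ℂ) = ∑ k, (starRingEnd ℂ) (x k) * y k := by
        intro x y
        simp [PiLp.inner_apply, RCLike.inner_apply, mul_comm]
      have hb_on := orthonormal_iff_ite.mp b.orthonormal
      have hU₁_unit : star U₁ * U₁ = 1 := by
        ext i j
        rw [Matrix.mul_apply, Matrix.one_apply]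
        have := hb_on i j
        rw [hinner] at this
        simpa [hU₁_def, Matrix.star_apply] using this
      -- first column of A is μ e₀
      set A : Matrix (Fin (n+1)) (Fin (n+1)) ℂ := U₁ᴴ * M * U₁ with hA_def
      have hMU₁ : ∀ k, (M * U₁) k 0 = μ * (w : Fin (n+1) → ℂ) k := by
        intro k
        have : (M * U₁) k 0 = M.mulVec (w : Fin (n+1) → ℂ) k := by
          simp [Matrix.mul_apply, Matrix.mulVec, dotProduct, hU₁_def, hb0]
        rw [this, h_eig]
        rfl
      have hA0 : ∀ i : Fin (n+1), i ≠ 0 → A i 0 = 0 := by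
        intro i hi
        have h1 : A i 0 = ∑ k, (starRingEnd ℂ) (U₁ k i) * ((M * U₁) k 0) := by
          rw [hA_def, Matrix.mul_assoc, Matrix.mul_apply]
          simp [Matrix.conjTranspose_apply]
        rw [h1]
        have h2 : ∑ k, (starRingEnd ℂ) (U₁ k i) * ((M * U₁) k 0)
            = μ * ∑ k, (starRingEnd ℂ) ((b i : EuclideanSpace ℂ (Fin (n+1))) k)
                * ((b 0 : EuclideanSpace ℂ (Fin (n+1))) k) := by
          rw [Finset.mul_sum]
          refine Finset.sum_congr rfl fun k _ => ?_
          rw [hMU₁ k]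
          simp [hU₁_def, hb0]
          ring
        rw [h2, ← hinner]
        have := hb_on i 0
        rw [if_neg hi] at this
        rw [this, mul_zero]
      -- induction
      obtain ⟨U₂, hU₂mem, hT₂⟩ := ih (A.submatrix Fin.succ Fin.succ)
      have hU₂_unit : star U₂ * U₂ = 1 := (Matrix.mem_unitaryGroup_iff'.mp hU₂mem)
      set V : Matrix (Fin (n+1)) (Fin (n+1)) ℂ := Matrix.of (fun i j =>
        (Fin.cases (Fin.cases (1:ℂ) (fun _ => 0) j)
          (fun i' => Fin.cases 0 (fun j' => U₂ i' j') j) i)) with hV_def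
      have hV00 : V 0 0 = 1 := rfl
      have hV0s : ∀ j' : Fin n, V 0 j'.succ = 0 := fun _ => rfl
      have hVs0 : ∀ i' : Fin n, V i'.succ 0 = 0 := fun _ => rfl
      have hVss : ∀ i' j' : Fin n, V i'.succ j'.succ = U₂ i' j' := fun _ _ => rfl
      have hV_unit : star V * V = 1 := by
        ext i j
        rw [Matrix.mul_apply]
        rw [Fin.sum_univ_succ]
        induction i using Fin.cases with
        | zero =>
            induction j using Fin.cases with
            | zero => simp [Matrix.star_apply, hV00, hVs0]
            | succ j' => simp [Matrix.star_apply, hV00, hV0s, hVs0, Matrix.one_apply,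
                (Fin.succ_ne_zero j').symm]
        | succ i' =>
            induction j using Fin.cases with
            | zero => simp [Matrix.star_apply, hV00, hV0s, hVs0, Matrix.one_apply,
                Fin.succ_ne_zero i']
            | succ j' =>
                have := congrFun (congrFun hU₂_unit i') j'
                rw [Matrix.mul_apply] at this
                simp only [Matrix.star_apply, hV0s, hVss, star_zero, zero_mul, zero_add]
                rw [show (1 : Matrix (Fin (n+1)) (Fin (n+1)) ℂ) i'.succ j'.succ
                    = (1 : Matrix (Fin n) (Fin n) ℂ) i' j' by
                  simp [Matrix.one_apply, Fin.succ_inj]]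
                rw [← this]
                rfl
      refine ⟨U₁ * V, mul_mem (Matrix.mem_unitaryGroup_iff'.mpr hU₁_unit)
        (Matrix.mem_unitaryGroup_iff'.mpr hV_unit), ?_⟩
      have hconj : (U₁ * V)ᴴ * M * (U₁ * V) = Vᴴ * A * V := by
        rw [Matrix.conjTranspose_mul, hA_def]
        noncomm_ring
      rw [hconj]
      -- entries of A * V
      have hAV0 : ∀ k, (A * V) k 0 = A k 0 := by
        intro k
        rw [Matrix.mul_apply, Fin.sum_univ_succ, hV00]
        simp [hVs0]
      have hAVs : ∀ k (j' : Fin n), (A * V) k j'.succ = ∑ l', A k l'.succ * U₂ l' j' := by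
        intro k j'
        rw [Matrix.mul_apply, Fin.sum_univ_succ, hV0s]
        simp [hVss]
      intro i j hij
      induction i using Fin.cases with
      | zero => exact absurd hij (by simp [Fin.not_lt_zero])
      | succ i' =>
          rw [Matrix.mul_assoc, Matrix.mul_apply, Fin.sum_univ_succ]
          induction j using Fin.cases with
          | zero =>
              simp only [Matrix.conjTranspose_apply, hVs0, star_zero, zero_mul,
                hV0s, hAV0]
              rw [zero_add]
              refine Finset.sum_eq_zero fun k' _ => ?_
              rw [hA0 k'.succ (Fin.succ_ne_zero k')]
              simp
          | succ j' =>
              have hj'i' : j' < i' := by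
                simpa [Fin.succ_lt_succ_iff] using hij
              have hT := hT₂ (show (id j' : Fin n) < id i' from hj'i')
              simp only [Matrix.conjTranspose_apply, hV0s, star_zero, zero_mul, zero_add]
              -- reduce to the submatrix statement
              have expand : ∑ k' : Fin n, star (V k'.succ i'.succ) * (A * V) k'.succ j'.succ
                  = (U₂ᴴ * (A.submatrix Fin.succ Fin.succ) * U₂) i' j' := by
                conv_rhs => rw [Matrix.mul_assoc, Matrix.mul_apply]
                refine Finset.sum_congr rfl fun k' _ => ?_
                rw [hVss, hAVs, Matrix.mul_apply]
                simp [Matrix.conjTranspose_apply, Matrix.submatrix_apply]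
              rw [expand, hT]

namespace SchurSel

open MeasureTheory Filter Topology

abbrev X (N : ℕ) : Type := Fin N → Fin N → ℂ

/-- the Schur predicate -/
def P (N : ℕ) (M U : X N) : Prop :=
  (Matrix.of U) ∈ Matrix.unitaryGroup (Fin N) ℂ ∧
    (((Matrix.of U)ᴴ * (Matrix.of M) * (Matrix.of U)).BlockTriangular id)

lemma hex (N : ℕ) (M : X N) : ∃ U, P N M U := by
  obtain ⟨U, hU, hT⟩ := schur_exists N (Matrix.of M)
  exact ⟨(Matrix.of).symm U, hU, hT⟩

lemma P_iff (N : ℕ) (M U : X N) :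
    P N M U ↔ (star (Matrix.of U) * Matrix.of U = 1 ∧
      ∀ i j : Fin N, (id j : Fin N) < id i →
        ((Matrix.of U)ᴴ * (Matrix.of M) * (Matrix.of U)) i j = 0) := by
  rw [P, Matrix.mem_unitaryGroup_iff']
  constructor
  · exact fun ⟨h1, h2⟩ => ⟨h1, fun i j hij => h2 hij⟩
  · exact fun ⟨h1, h2⟩ => ⟨h1, fun i j hij => h2 i j hij⟩

lemma hclosed (N : ℕ) : IsClosed {p : X N × X N | P N p.1 p.2} := by
  have : {p : X N × X N | P N p.1 p.2} =
      {p : X N × X N | star (Matrix.of p.2) * Matrix.of p.2 = 1} ∩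
      ⋂ (i : Fin N) (j : Fin N),
        {p : X N × X N | (id j : Fin N) < id i →
          ((Matrix.of p.2)ᴴ * (Matrix.of p.1) * (Matrix.of p.2)) i j = 0} := by
    ext p
    simp only [Set.mem_setOf_eq, Set.mem_inter_iff, Set.mem_iInter, P_iff]
  rw [this]
  have hc2 : Continuous (fun p : X N × X N => (Matrix.of p.2 : Matrix (Fin N) (Fin N) ℂ)) :=
    continuous_snd
  have hc1 : Continuous (fun p : X N × X N => (Matrix.of p.1 : Matrix (Fin N) (Fin N) ℂ)) :=
    continuous_fst
  refine IsClosed.inter ?_ ?_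
  · exact isClosed_singleton.preimage ((hc2.star).matrix_mul hc2)
  · refine isClosed_iInter fun i => isClosed_iInter fun j => ?_
    by_cases hij : (id j : Fin N) < id i
    · have : {p : X N × X N | (id j : Fin N) < id i →
          ((Matrix.of p.2)ᴴ * (Matrix.of p.1) * (Matrix.of p.2)) i j = 0}
          = {p : X N × X N |
          ((Matrix.of p.2)ᴴ * (Matrix.of p.1) * (Matrix.of p.2)) i j = 0} := by
        ext p; exact ⟨fun h => h hij, fun h _ => h⟩
      rw [this]
      have hcont : Continuous (fun p : X N × X N =>
          ((Matrix.of p.2)ᴴ * (Matrix.of p.1) * (Matrix.of p.2)) i j) := by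
        have := ((hc2.matrix_conjTranspose.matrix_mul hc1).matrix_mul hc2)
        exact (continuous_apply j).comp ((continuous_apply i).comp this)
      exact isClosed_singleton.preimage hcont
    · have : {p : X N × X N | (id j : Fin N) < id i →
          ((Matrix.of p.2)ᴴ * (Matrix.of p.1) * (Matrix.of p.2)) i j = 0} = Set.univ := by
        ext p
        simp only [Set.mem_setOf_eq, Set.mem_univ, iff_true]
        exact fun h => absurd h hij
      rw [this]; exact isClosed_univ

lemma hbdd (N : ℕ) (M U : X N) (h : P N M U) : U ∈ Metric.closedBall (0 : X N) 1 := by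
  have h1 : star (Matrix.of U) * Matrix.of U = 1 := ((P_iff N M U).mp h).1
  rw [Metric.mem_closedBall, dist_zero_right]
  rw [pi_norm_le_iff_of_nonneg zero_le_one]
  intro i
  rw [pi_norm_le_iff_of_nonneg zero_le_one]
  intro j
  have hjj := congrFun (congrFun h1 j) j
  rw [Matrix.mul_apply, Matrix.one_apply_eq] at hjj
  have hsum : ∑ k, Complex.normSq (Matrix.of U k j) = 1 := by
    have : ∀ k, (star (Matrix.of U) : Matrix (Fin N) (Fin N) ℂ) j k * Matrix.of U k j
        = (Complex.normSq (Matrix.of U k j) : ℂ) := by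
      intro k
      rw [Matrix.star_apply, Complex.star_def, mul_comm, Complex.mul_conj]
    rw [Finset.sum_congr rfl (fun k _ => this k)] at hjj
    have := congrArg Complex.re hjj
    rw [Complex.re_sum] at this
    simpa using this
  have hle : Complex.normSq (Matrix.of U i j) ≤ 1 := by
    rw [← hsum]
    exact Finset.single_le_sum (f := fun k => Complex.normSq (Matrix.of U k j))
      (fun k _ => Complex.normSq_nonneg _) (Finset.mem_univ i)
  have : ‖U i j‖ ^ 2 ≤ 1 := by
    rwa [← Complex.sq_norm] at hle
  nlinarith [norm_nonneg (U i j)]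

end SchurSel

namespace SchurSel

open MeasureTheory Filter Topology
open scoped Classical

noncomputable def eseq (N : ℕ) : ℕ → X N := TopologicalSpace.denseSeq (X N)

lemma eseq_dense (N : ℕ) : DenseRange (eseq N) := TopologicalSpace.denseRange_denseSeq (X N)

noncomputable def rr (n : ℕ) : ℝ := (1/2 : ℝ)^n

lemma rr_pos (n : ℕ) : 0 < rr n := by rw [rr]; positivity

noncomputable def pick (N : ℕ) (S : Set (X N)) (n : ℕ) : ℕ :=
  if h : ∃ k, (S ∩ Metric.closedBall (eseq N k) (rr n)).Nonempty then Nat.find h else 0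

def Phi (N : ℕ) (M : X N) : Set (X N) := {U | P N M U}

noncomputable def FF (N : ℕ) (M : X N) : ℕ → Set (X N)
  | 0 => Phi N M
  | n+1 => FF N M n ∩ Metric.closedBall (eseq N (pick N (FF N M n) n)) (rr n)

lemma exists_pick (N : ℕ) {S : Set (X N)} (hS : S.Nonempty) (n : ℕ) :
    ∃ k, (S ∩ Metric.closedBall (eseq N k) (rr n)).Nonempty := by
  obtain ⟨x, hx⟩ := hS
  obtain ⟨k, hk⟩ := Metric.denseRange_iff.mp (eseq_dense N) x (rr n) (rr_pos n)
  exact ⟨k, x, hx, Metric.mem_closedBall.mpr hk.le⟩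

lemma FF_nonempty (N : ℕ) (M : X N) : ∀ n, (FF N M n).Nonempty
  | 0 => hex N M
  | n+1 => by
      have h := exists_pick N (FF_nonempty N M n) n
      rw [FF, pick, dif_pos h]
      exact Nat.find_spec h

lemma FF_subset_Phi (N : ℕ) (M : X N) : ∀ n, FF N M n ⊆ Phi N M
  | 0 => subset_rfl
  | n+1 => (Set.inter_subset_left).trans (FF_subset_Phi N M n)

noncomputable def kf (N : ℕ) (M : X N) (n : ℕ) : ℕ := pick N (FF N M n) n

lemma kf_eq (N : ℕ) (M : X N) (n : ℕ) :
    kf N M n = Nat.find (exists_pick N (FF_nonempty N M n) n) := by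
  rw [kf, pick, dif_pos (exists_pick N (FF_nonempty N M n) n)]

lemma FF_succ (N : ℕ) (M : X N) (n : ℕ) :
    FF N M (n+1) = FF N M n ∩ Metric.closedBall (eseq N (kf N M n)) (rr n) := rfl

noncomputable def gg (N : ℕ) (n : ℕ) (M : X N) : X N := eseq N (kf N M n)

noncomputable def psi (N : ℕ) (M : X N) : X N := limUnder atTop (fun n => gg N n M)

lemma event_closed (N : ℕ) {C : Set (X N)} (hC : IsClosed C) :
    IsClosed {M : X N | (Phi N M ∩ C).Nonempty} := by
  set K := Metric.closedBall (0 : X N) 1 with hK_def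
  have hK : IsCompact K := isCompact_closedBall _ _
  haveI : CompactSpace K := isCompact_iff_compactSpace.mp hK
  have h1 : {M : X N | (Phi N M ∩ C).Nonempty}
      = Prod.fst '' {p : X N × K | P N p.1 ↑p.2 ∧ (↑p.2 : X N) ∈ C} := by
    ext M
    constructor
    · rintro ⟨U, hU, hUC⟩
      exact ⟨(M, ⟨U, hbdd N M U hU⟩), ⟨hU, hUC⟩, rfl⟩
    · rintro ⟨⟨M', U⟩, ⟨hU, hUC⟩, rfl⟩
      exact ⟨↑U, hU, hUC⟩
  rw [h1]
  apply isClosedMap_fst_of_compactSpace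
  have hcont : Continuous (fun p : X N × K => ((p.1, ↑p.2) : X N × X N)) :=
    continuous_fst.prodMk (continuous_subtype_val.comp continuous_snd)
  have h2 : {p : X N × K | P N p.1 ↑p.2 ∧ (↑p.2 : X N) ∈ C}
      = (fun p : X N × K => ((p.1, ↑p.2) : X N × X N)) ⁻¹' {q : X N × X N | P N q.1 q.2}
        ∩ (fun p : X N × K => (↑p.2 : X N)) ⁻¹' C := rfl
  rw [h2]
  exact ((hclosed N).preimage hcont).inter
    (hC.preimage (continuous_subtype_val.comp continuous_snd))

lemma meas_event (N : ℕ) : ∀ (n : ℕ) (C : Set (X N)), IsClosed C →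
    MeasurableSet {M : X N | (FF N M n ∩ C).Nonempty}
  | 0, C, hC => (event_closed N hC).measurableSet
  | n+1, C, hC => by
      have hkf_meas : ∀ k : ℕ, MeasurableSet {M : X N | kf N M n = k} := by
        intro k
        have : {M : X N | kf N M n = k} =
            {M : X N | (FF N M n ∩ Metric.closedBall (eseq N k) (rr n)).Nonempty}
            ∩ ⋂ (j : ℕ) (_ : j < k),
              {M : X N | (FF N M n ∩ Metric.closedBall (eseq N j) (rr n)).Nonempty}ᶜ := by
          ext M
          rw [Set.mem_setOf_eq, kf_eq, Nat.find_eq_iff]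
          simp only [Set.mem_inter_iff, Set.mem_setOf_eq, Set.mem_iInter, Set.mem_compl_iff]
        rw [this]
        refine (meas_event N n _ Metric.isClosed_closedBall).inter ?_
        refine MeasurableSet.iInter fun j => MeasurableSet.iInter fun _ => ?_
        exact (meas_event N n _ Metric.isClosed_closedBall).compl
      have hset : {M : X N | (FF N M (n+1) ∩ C).Nonempty} =
          ⋃ k : ℕ, ({M : X N | kf N M n = k} ∩
            {M : X N | (FF N M n ∩ (Metric.closedBall (eseq N k) (rr n) ∩ C)).Nonempty}) := by
        ext M
        constructor
        · intro h
          refine Set.mem_iUnion.mpr ⟨kf N M n, rfl, ?_⟩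
          simp only [Set.mem_setOf_eq, FF_succ] at h
          obtain ⟨U, ⟨h1, h2⟩, h3⟩ := h
          exact ⟨U, h1, h2, h3⟩
        · intro h
          obtain ⟨k, hk, hU⟩ := Set.mem_iUnion.mp h
          obtain ⟨U, h1, h2, h3⟩ := hU
          simp only [Set.mem_setOf_eq, FF_succ]
          simp only [Set.mem_setOf_eq] at hk
          rw [hk]
          exact ⟨U, ⟨h1, h2⟩, h3⟩
      rw [hset]
      refine MeasurableSet.iUnion fun k => (hkf_meas k).inter ?_
      exact meas_event N n _ (Metric.isClosed_closedBall.inter hC)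

lemma kf_measurable (N : ℕ) (n : ℕ) : Measurable (fun M => kf N M n) := by
  refine measurable_to_countable' fun k => ?_
  have : (fun M => kf N M n) ⁻¹' {k} = {M : X N | kf N M n = k} := by
    ext M; simp [Set.mem_preimage]
  rw [this]
  have h : {M : X N | kf N M n = k} =
      {M : X N | (FF N M n ∩ Metric.closedBall (eseq N k) (rr n)).Nonempty}
      ∩ ⋂ (j : ℕ) (_ : j < k),
        {M : X N | (FF N M n ∩ Metric.closedBall (eseq N j) (rr n)).Nonempty}ᶜ := by
    ext M
    rw [Set.mem_setOf_eq, kf_eq, Nat.find_eq_iff]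
    simp only [Set.mem_inter_iff, Set.mem_setOf_eq, Set.mem_iInter, Set.mem_compl_iff]
  rw [h]
  refine (meas_event N n _ Metric.isClosed_closedBall).inter ?_
  refine MeasurableSet.iInter fun j => MeasurableSet.iInter fun _ => ?_
  exact (meas_event N n _ Metric.isClosed_closedBall).compl

lemma gg_measurable (N : ℕ) (n : ℕ) : Measurable (gg N n) :=
  measurable_from_top.comp (kf_measurable N n)

lemma dist_gg (N : ℕ) (M : X N) (n : ℕ) :
    dist (gg N n M) (gg N (n+1) M) ≤ 2 * (1/2 : ℝ)^n := by
  obtain ⟨x, hx⟩ := FF_nonempty N M (n+2)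
  rw [FF_succ] at hx
  obtain ⟨hx1, hx2⟩ := hx
  rw [FF_succ] at hx1
  obtain ⟨_, hx3⟩ := hx1
  have d1 : dist x (gg N n M) ≤ rr n := Metric.mem_closedBall.mp hx3
  have d2 : dist x (gg N (n+1) M) ≤ rr (n+1) := Metric.mem_closedBall.mp hx2
  calc dist (gg N n M) (gg N (n+1) M) ≤ dist (gg N n M) x + dist x (gg N (n+1) M) :=
        dist_triangle _ _ _
    _ ≤ rr n + rr (n+1) := add_le_add (by rwa [dist_comm] at d1) d2
    _ ≤ 2 * (1/2 : ℝ)^n := by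
        rw [rr, rr, pow_succ]
        nlinarith [pow_pos (by norm_num : (0:ℝ) < 1/2) n]

lemma gg_cauchy (N : ℕ) (M : X N) : CauchySeq (fun n => gg N n M) :=
  cauchySeq_of_le_geometric (1/2) 2 (by norm_num) (dist_gg N M)

lemma gg_tendsto (N : ℕ) (M : X N) :
    Tendsto (fun n => gg N n M) atTop (𝓝 (psi N M)) :=
  (gg_cauchy N M).tendsto_limUnder

lemma psi_mem (N : ℕ) (M : X N) : P N M (psi N M) := by
  set x : ℕ → X N := fun n => (FF_nonempty N M (n+1)).choose with hx_def
  have hx : ∀ n, x n ∈ FF N M (n+1) := fun n => (FF_nonempty N M (n+1)).choose_spec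
  have hdist : ∀ n, dist (x n) (gg N n M) ≤ rr n := by
    intro n
    have := hx n
    rw [FF_succ] at this
    exact Metric.mem_closedBall.mp this.2
  have hx_tendsto : Tendsto x atTop (𝓝 (psi N M)) := by
    refine (gg_tendsto N M).congr_dist ?_
    have hrr : Tendsto rr atTop (𝓝 (0:ℝ)) :=
      tendsto_pow_atTop_nhds_zero_of_lt_one (by norm_num) (by norm_num)
    refine squeeze_zero (fun n => dist_nonneg) (fun n => ?_) hrr
    rw [dist_comm]
    exact hdist n
  have hPhi_closed : IsClosed (Phi N M) := by
    have : Phi N M = (fun U : X N => ((M, U) : X N × X N)) ⁻¹' {p : X N × X N | P N p.1 p.2} :=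
      rfl
    rw [this]
    exact (hclosed N).preimage (continuous_const.prodMk continuous_id)
  have : psi N M ∈ Phi N M :=
    hPhi_closed.mem_of_tendsto hx_tendsto
      (Filter.Eventually.of_forall fun n => FF_subset_Phi N M (n+1) (hx n))
  exact this

lemma psi_measurable (N : ℕ) : Measurable (psi N) :=
  measurable_of_tendsto_metrizable (fun n => gg_measurable N n)
    (tendsto_pi_nhds.mpr fun M => gg_tendsto N M)

end SchurSel

noncomputable instance matrixMeasurableSpace (N : ℕ) :
    MeasurableSpace (Matrix (Fin N) (Fin N) ℂ) :=
  inferInstanceAs (MeasurableSpace (Fin N → Fin N → ℂ))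

/-- For each `N` there is a Borel-measurable map `ψ` on `N × N` complex matrices
such that `ψ(M)` is always unitary and `ψ(M)* M ψ(M)` is upper triangular
(a measurable Schur triangularization). -/
theorem exists_measurable_schur_triangularization (N : ℕ) :
    ∃ ψ : Matrix (Fin N) (Fin N) ℂ → Matrix (Fin N) (Fin N) ℂ,
      Measurable ψ ∧
      ∀ M : Matrix (Fin N) (Fin N) ℂ,
        ψ M ∈ Matrix.unitaryGroup (Fin N) ℂ ∧
        ((ψ M)ᴴ * M * ψ M).BlockTriangular id := by
  refine ⟨SchurSel.psi N, SchurSel.psi_measurable N, fun M => SchurSel.psi_mem N M⟩
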